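/- Let A and B be finitely generated infinite groups and let H be a subgroup of the direct product A × B. If H is a Morse subgroup of A × B, then H is either finite or of finite index in A × B. -/

import Mathlib

section WordMetric

variable {G : Type*} [Group G]

/-- Word length of `g` with respect to a generating set `S` (letters from `S ∪ S⁻¹`). -/
noncomputable def wordLength (S : Set G) (g : G) : ℕ :=
  sInf {n : ℕ | ∃ f : Fin n → G, (∀ i, f i ∈ S ∨ (f i)⁻¹ ∈ S) ∧ (List.ofFn f).prod = g}

/-- Word metric associated to a generating set `S`. -/
noncomputable def wordDist (S : Set G) (g h : G) : ℝ :=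
  (wordLength S (g⁻¹ * h) : ℝ)

/-- A discrete `(k, c)`-quasigeodesic in `G` for the word metric of `S`. -/
def IsQuasiGeodesic (S : Set G) (k c : ℝ) {n : ℕ} (γ : Fin (n + 1) → G) : Prop :=
  ∀ i j : Fin (n + 1),
    (1 / k) * |(i : ℝ) - (j : ℝ)| - c ≤ wordDist S (γ i) (γ j) ∧
      wordDist S (γ i) (γ j) ≤ k * |(i : ℝ) - (j : ℝ)| + c

/-- `H` is a Morse (strongly quasiconvex) subgroup of `G` for the word metric of `S`. -/
def IsMorse (S : Set G) (H : Subgroup G) : Prop :=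
  ∀ k c : ℝ, 1 ≤ k → 0 ≤ c → ∃ M : ℝ, ∀ (n : ℕ) (γ : Fin (n + 1) → G),
    IsQuasiGeodesic S k c γ → γ 0 ∈ H → γ (Fin.last n) ∈ H →
      ∀ i, ∃ h ∈ H, wordDist S (γ i) h ≤ M

/-- `H` is a finitely generated undistorted subgroup of `G` for the word metric of `S`. -/
def Undistorted (S : Set G) (H : Subgroup G) : Prop :=
  ∃ T : Set H, T.Finite ∧ Subgroup.closure T = ⊤ ∧
    ∃ k c : ℝ, 1 ≤ k ∧ 0 ≤ c ∧
      ∀ h h' : H, wordDist T h h' ≤ k * wordDist S (h : G) (h' : G) + c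

end WordMetric

section Aux

variable {G : Type*} [Group G]

/-- letters condition for a list -/
def Ltr (S : Set G) (l : List G) : Prop := ∀ x ∈ l, x ∈ S ∨ x⁻¹ ∈ S

theorem wordLength_le {S : Set G} {l : List G} (hl : Ltr S l) {g : G} (hp : l.prod = g) :
    wordLength S g ≤ l.length := by
  apply Nat.sInf_le
  exact ⟨l.get, fun i => hl _ (l.get_mem i), by rw [List.ofFn_get]; exact hp⟩

theorem exists_word {S : Set G} (hS : Subgroup.closure S = ⊤) (g : G) :
    ∃ l : List G, Ltr S l ∧ l.prod = g := by
  have hg : g ∈ Subgroup.closure S := by rw [hS]; trivial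
  induction hg using Subgroup.closure_induction with
  | mem x hx => exact ⟨[x], fun y hy => by simp_all, by simp⟩
  | one => exact ⟨[], fun y hy => by simp_all, by simp⟩
  | mul x y hx hy ihx ihy =>
      obtain ⟨l1, h1, p1⟩ := ihx
      obtain ⟨l2, h2, p2⟩ := ihy
      exact ⟨l1 ++ l2, fun z hz => by
        rcases List.mem_append.mp hz with h | h
        · exact h1 z h
        · exact h2 z h, by rw [List.prod_append, p1, p2]⟩
  | inv x hx ihx =>
      obtain ⟨l, h1, p1⟩ := ihx
      refine ⟨(l.map fun y => y⁻¹).reverse, fun z hz => ?_, ?_⟩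
      · rw [List.mem_reverse, List.mem_map] at hz
        obtain ⟨y, hy, rfl⟩ := hz
        rcases h1 y hy with h | h
        · right; simpa using h
        · left; exact h
      · rw [← List.prod_inv_reverse, p1]

theorem wordLength_spec {S : Set G} (hS : Subgroup.closure S = ⊤) (g : G) :
    ∃ l : List G, Ltr S l ∧ l.prod = g ∧ l.length = wordLength S g := by
  have hne : {n : ℕ | ∃ f : Fin n → G, (∀ i, f i ∈ S ∨ (f i)⁻¹ ∈ S) ∧ (List.ofFn f).prod = g}.Nonempty := by
    obtain ⟨l, hl, hp⟩ := exists_word hS g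
    exact ⟨l.length, l.get, fun i => hl _ (l.get_mem i), by rw [List.ofFn_get]; exact hp⟩
  obtain ⟨f, hf, hp⟩ := Nat.sInf_mem hne
  refine ⟨List.ofFn f, fun x hx => ?_, hp, by simp [wordLength]⟩
  rw [List.mem_ofFn] at hx
  obtain ⟨i, rfl⟩ := hx
  exact hf i

theorem wordLength_one (S : Set G) : wordLength S 1 = 0 :=
  Nat.le_zero.mp (wordLength_le (S := S) (l := []) (fun x hx => by simp_all) (by simp))

theorem wordLength_mul {S : Set G} (hS : Subgroup.closure S = ⊤) (g h : G) :
    wordLength S (g * h) ≤ wordLength S g + wordLength S h := by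
  obtain ⟨l1, h1, p1, e1⟩ := wordLength_spec hS g
  obtain ⟨l2, h2, p2, e2⟩ := wordLength_spec hS h
  calc wordLength S (g * h) ≤ (l1 ++ l2).length := wordLength_le
        (fun z hz => by rcases List.mem_append.mp hz with hh | hh; exacts [h1 z hh, h2 z hh])
        (by rw [List.prod_append, p1, p2])
    _ = wordLength S g + wordLength S h := by rw [List.length_append, e1, e2]

theorem wordLength_inv_le {S : Set G} (hS : Subgroup.closure S = ⊤) (g : G) :
    wordLength S g⁻¹ ≤ wordLength S g := by
  obtain ⟨l, hl, hp, he⟩ := wordLength_spec hS g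
  calc wordLength S g⁻¹ ≤ ((l.map fun y => y⁻¹).reverse).length := wordLength_le
        (fun z hz => by
          rw [List.mem_reverse, List.mem_map] at hz
          obtain ⟨y, hy, rfl⟩ := hz
          rcases hl y hy with h | h
          · right; simpa using h
          · left; exact h)
        (by rw [← List.prod_inv_reverse, hp])
    _ = wordLength S g := by simpa using he

theorem wordLength_inv {S : Set G} (hS : Subgroup.closure S = ⊤) (g : G) :
    wordLength S g⁻¹ = wordLength S g :=
  le_antisymm (wordLength_inv_le hS g) (by simpa using wordLength_inv_le hS g⁻¹)

theorem wordDist_symm {S : Set G} (hS : Subgroup.closure S = ⊤) (g h : G) :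
    wordDist S g h = wordDist S h g := by
  unfold wordDist
  rw [show h⁻¹ * g = (g⁻¹ * h)⁻¹ by group, wordLength_inv hS]

theorem wordLength_list_prod_le {S : Set G} (hS : Subgroup.closure S = ⊤) {C : ℕ}
    {l : List G} (hl : ∀ x ∈ l, wordLength S x ≤ C) :
    wordLength S l.prod ≤ C * l.length := by
  induction l with
  | nil => simpa using (wordLength_one S).le
  | cons x t ih =>
      rw [List.prod_cons]
      calc wordLength S (x * t.prod) ≤ wordLength S x + wordLength S t.prod :=
            wordLength_mul hS _ _
        _ ≤ C + C * t.length := add_le_add (hl x (by simp)) (ih fun y hy => hl y (by simp [hy]))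
        _ = C * (t.length + 1) := by ring
        _ = C * (x :: t).length := by simp


variable {G' : Type*} [Group G']

/-- Geodesic prefix path. -/
theorem exists_geodesic {S : Set G} (hS : Subgroup.closure S = ⊤) (g : G) :
    ∃ α : ℕ → G, α 0 = 1 ∧ α (wordLength S g) = g ∧
      ∀ i j : ℕ, i ≤ j → j ≤ wordLength S g →
        wordLength S ((α i)⁻¹ * α j) = j - i := by
  obtain ⟨l, hl, hp, he⟩ := wordLength_spec hS g
  refine ⟨fun i => (l.take i).prod, by simp, by simp [he ▸ List.take_length (l := l), hp], ?_⟩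
  intro i j hij hj
  have key : ∀ a b : ℕ, a ≤ b → b ≤ l.length →
      (l.take a).prod⁻¹ * (l.take b).prod = ((l.drop a).take (b - a)).prod := by
    intro a b hab hbl
    have : l.take b = l.take a ++ (l.drop a).take (b - a) := by
      rw [← List.take_add, Nat.add_sub_cancel' hab]
    rw [this, List.prod_append]
    group
  have hj' : j ≤ l.length := by omega
  show wordLength S ((l.take i).prod⁻¹ * (l.take j).prod) = j - i
  rw [key i j hij hj']
  have hlen : ((l.drop i).take (j - i)).length = j - i := by
    rw [List.length_take, List.length_drop]
    omega
  -- upper bound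
  have hub : wordLength S ((l.drop i).take (j - i)).prod ≤ j - i := by
    have := wordLength_le (l := (l.drop i).take (j - i)) (S := S)
      (fun x hx => hl x (List.mem_of_mem_drop (List.mem_of_mem_take hx)))
      rfl
    omega
  -- lower bound: shortcut would shorten the word
  by_contra hne
  have hlt : wordLength S ((l.drop i).take (j - i)).prod < j - i := lt_of_le_of_ne hub hne
  obtain ⟨m, hm, pm, em⟩ := wordLength_spec hS ((l.drop i).take (j - i)).prod
  -- l.take i ++ m ++ l.drop j  has product g and length < l.length
  have hprod : (l.take i ++ m ++ l.drop j).prod = g := by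
    rw [List.prod_append, List.prod_append, pm]
    have h1 : l.take j = l.take i ++ (l.drop i).take (j - i) := by
      rw [← List.take_add, Nat.add_sub_cancel' hij]
    calc (l.take i).prod * ((l.drop i).take (j - i)).prod * (l.drop j).prod
        = (l.take j).prod * (l.drop j).prod := by rw [h1, List.prod_append]
      _ = l.prod := List.prod_take_mul_prod_drop l j
      _ = g := hp
  have hltr : Ltr S (l.take i ++ m ++ l.drop j) := by
    intro x hx
    rcases List.mem_append.mp hx with hx | hx
    · rcases List.mem_append.mp hx with hx | hx
      · exact hl x (List.mem_of_mem_take hx)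
      · exact hm x hx
    · exact hl x (List.mem_of_mem_drop hx)
  have := wordLength_le hltr hprod
  rw [List.length_append, List.length_append, List.length_take, List.length_drop, em, ← he] at this
  omega

/-- finiteness of balls -/
theorem finite_ball {S : Set G} (hSfin : S.Finite) (hS : Subgroup.closure S = ⊤) (N : ℕ) :
    {g : G | wordLength S g ≤ N}.Finite := by
  have key : ∀ n : ℕ, {g : G | ∃ l : List G, Ltr S l ∧ l.prod = g ∧ l.length ≤ n}.Finite := by
    intro n
    induction n with
    | zero =>
        apply Set.Finite.subset (Set.finite_singleton 1)
        rintro g ⟨l, -, hp, hlen⟩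
        rw [List.length_eq_zero_iff.mp (Nat.le_zero.mp hlen)] at hp
        simp [← hp]
    | succ n ih =>
        apply Set.Finite.subset (Set.Finite.union (Set.finite_singleton 1)
          (Set.Finite.image2 (· * ·) (hSfin.union (hSfin.inv)) ih))
        rintro g ⟨l, hl, hp, hlen⟩
        match l with
        | [] => left; simp [← hp]
        | x :: t =>
            right
            refine Set.mem_image2.mpr ⟨x, ?_, t.prod, ⟨t, fun y hy => hl y (by simp [hy]), rfl, by
              simp at hlen; omega⟩, by rw [← hp, List.prod_cons]⟩
            rcases hl x (by simp) with h | h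
            · exact Or.inl h
            · exact Or.inr (Set.mem_inv.mpr (by simpa using h))
  apply Set.Finite.subset (key N)
  intro g hg
  obtain ⟨l, hl, hp, he⟩ := wordLength_spec hS g
  exact ⟨l, hl, hp, by rw [he]; exact hg⟩

theorem exists_large {S : Set G} (hSfin : S.Finite) (hS : Subgroup.closure S = ⊤)
    {T : Set G} (hT : T.Infinite) (N : ℕ) : ∃ g ∈ T, N ≤ wordLength S g := by
  obtain ⟨g, hgT, hgB⟩ := (hT.diff (finite_ball hSfin hS N)).nonempty
  exact ⟨g, hgT, le_of_lt (Nat.lt_of_not_le (by simpa using hgB))⟩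

/-- mapping under a hom -/
theorem wordLength_map_le {S : Set G} (hS : Subgroup.closure S = ⊤) (φ : G →* G') (g : G) :
    wordLength (φ '' S) (φ g) ≤ wordLength S g := by
  obtain ⟨l, hl, hp, he⟩ := wordLength_spec hS g
  calc wordLength (φ '' S) (φ g) ≤ (l.map φ).length := wordLength_le
        (fun x hx => by
          rw [List.mem_map] at hx
          obtain ⟨y, hy, rfl⟩ := hx
          rcases hl y hy with h | h
          · exact Or.inl ⟨y, h, rfl⟩
          · exact Or.inr ⟨y⁻¹, h, by simp⟩)
        (by rw [← hp]; exact (List.prod_hom l φ).symm ▸ rfl)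
    _ = wordLength S g := by simpa using he

theorem wordLength_equiv {S : Set G} (hS : Subgroup.closure S = ⊤) (e : G ≃* G') (g : G) :
    wordLength (e '' S) (e g) = wordLength S g := by
  refine le_antisymm (wordLength_map_le hS e.toMonoidHom g) ?_
  have hS' : Subgroup.closure ((e : G →* G') '' S) = ⊤ := by
    rw [← MonoidHom.map_closure, hS]
    exact Subgroup.map_top_of_surjective _ e.surjective
  have := wordLength_map_le hS' e.symm.toMonoidHom (e g)
  simp only [MulEquiv.coe_toMonoidHom] at this ⊢
  calc wordLength S g = wordLength (e.symm '' (e '' S)) (e.symm (e g)) := by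
        rw [← Set.image_comp]
        simp
    _ ≤ wordLength (e '' S) (e g) := this


theorem abs_coe_sub {n : ℕ} (i j : Fin (n+1)) (h : (i:ℕ) ≤ (j:ℕ)) :
    |(i : ℝ) - (j : ℝ)| = (((j:ℕ) - (i:ℕ) : ℕ) : ℝ) := by
  rw [abs_sub_comm, abs_of_nonneg (by simp [sub_nonneg, Nat.cast_le, h] : (0:ℝ) ≤ (j:ℝ) - (i:ℝ))]
  push_cast [Nat.cast_sub h]
  ring

theorem eq_one_of_wordLength_eq_zero {S : Set G} (hS : Subgroup.closure S = ⊤) {g : G}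
    (h : wordLength S g = 0) : g = 1 := by
  obtain ⟨l, -, hp, he⟩ := wordLength_spec hS g
  rw [h, List.length_eq_zero_iff] at he
  rw [← hp, he, List.prod_nil]

/-- Main interface to the Morse property, with natural-number bounds. -/
theorem morse_nat {S : Set G} (hS : Subgroup.closure S = ⊤) {H : Subgroup G}
    (hH : IsMorse S H) (K C : ℕ) (hK : 1 ≤ K) (hC : 1 ≤ C) :
    ∃ M : ℕ, ∀ (n : ℕ) (γ : Fin (n+1) → G),
      (∀ i j : Fin (n+1), (i:ℕ) ≤ (j:ℕ) →
        wordLength S ((γ i)⁻¹ * γ j) ≤ C * ((j:ℕ) - (i:ℕ)) ∧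
        ((j:ℕ) - (i:ℕ)) ≤ K * wordLength S ((γ i)⁻¹ * γ j)) →
      γ 0 ∈ H → γ (Fin.last n) ∈ H →
      ∀ i, ∃ h ∈ H, wordLength S ((γ i)⁻¹ * h) ≤ M := by
  set k : ℝ := ((max K C : ℕ) : ℝ) with hk
  have hk1 : (1:ℝ) ≤ k := by
    rw [hk]
    exact_mod_cast le_trans hK (le_max_left K C)
  have hk0 : (0:ℝ) < k := lt_of_lt_of_le one_pos hk1
  obtain ⟨M, hM⟩ := hH k 0 hk1 le_rfl
  refine ⟨⌈M⌉₊, fun n γ hγ h0 hl i => ?_⟩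
  have hQG : IsQuasiGeodesic S k 0 γ := by
    intro i j
    have main : ∀ i j : Fin (n+1), (i:ℕ) ≤ (j:ℕ) →
        (1 / k) * |(i : ℝ) - (j : ℝ)| - 0 ≤ wordDist S (γ i) (γ j) ∧
          wordDist S (γ i) (γ j) ≤ k * |(i : ℝ) - (j : ℝ)| + 0 := by
      intro i j hij
      obtain ⟨hup, hlo⟩ := hγ i j hij
      rw [abs_coe_sub i j hij]
      unfold wordDist
      set d : ℕ := wordLength S ((γ i)⁻¹ * γ j)
      set D : ℕ := (j:ℕ) - (i:ℕ)
      constructor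
      · rw [sub_zero, one_div]
        rw [inv_mul_le_iff₀ hk0]
        calc (D : ℝ) ≤ (K:ℝ) * (d:ℝ) := by exact_mod_cast hlo
          _ ≤ k * (d:ℝ) := by
              apply mul_le_mul_of_nonneg_right _ (by positivity)
              rw [hk]; exact_mod_cast le_max_left K C
      · rw [add_zero]
        calc (d : ℝ) ≤ (C:ℝ) * (D:ℝ) := by exact_mod_cast hup
          _ ≤ k * (D:ℝ) := by
              apply mul_le_mul_of_nonneg_right _ (by positivity)
              rw [hk]; exact_mod_cast le_max_right K C
    rcases le_total (i:ℕ) (j:ℕ) with h | h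
    · exact main i j h
    · have := main j i h
      have hsym : wordDist S (γ i) (γ j) = wordDist S (γ j) (γ i) := wordDist_symm hS _ _
      rw [hsym, abs_sub_comm]
      exact this
  obtain ⟨h, hhH, hhd⟩ := hM n γ hQG h0 hl i
  refine ⟨h, hhH, ?_⟩
  have : (wordLength S ((γ i)⁻¹ * h) : ℝ) ≤ (⌈M⌉₊ : ℝ) :=
    le_trans hhd (Nat.le_ceil M)
  exact_mod_cast this

section ProdSection

variable {A B : Type*} [Group A] [Group B] {S : Set (A × B)}

theorem genFst (hSgen : Subgroup.closure S = ⊤) :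
    Subgroup.closure (Prod.fst '' S : Set A) = ⊤ := by
  rw [show (Prod.fst : A × B → A) = ⇑(MonoidHom.fst A B) from rfl,
    ← MonoidHom.map_closure (MonoidHom.fst A B), hSgen]
  exact Subgroup.map_top_of_surjective _ Prod.fst_surjective

theorem genSnd (hSgen : Subgroup.closure S = ⊤) :
    Subgroup.closure (Prod.snd '' S : Set B) = ⊤ := by
  rw [show (Prod.snd : A × B → B) = ⇑(MonoidHom.snd A B) from rfl,
    ← MonoidHom.map_closure (MonoidHom.snd A B), hSgen]
  exact Subgroup.map_top_of_surjective _ Prod.snd_surjective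

theorem exists_letterBound (hSfin : S.Finite) :
    ∃ C : ℕ, 1 ≤ C ∧
      (∀ x : A, (x ∈ Prod.fst '' S ∨ x⁻¹ ∈ Prod.fst '' S) →
        wordLength S ((x, (1:B)) : A × B) ≤ C) ∧
      (∀ y : B, (y ∈ Prod.snd '' S ∨ y⁻¹ ∈ Prod.snd '' S) →
        wordLength S (((1:A), y) : A × B) ≤ C) := by
  have h1 : ((fun x : A => wordLength S ((x, (1:B)) : A × B)) ''
      ((Prod.fst '' S) ∪ (Prod.fst '' S)⁻¹)).Finite :=
    (((hSfin.image Prod.fst).union (hSfin.image Prod.fst).inv).image _)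
  have h2 : ((fun y : B => wordLength S (((1:A), y) : A × B)) ''
      ((Prod.snd '' S) ∪ (Prod.snd '' S)⁻¹)).Finite :=
    (((hSfin.image Prod.snd).union (hSfin.image Prod.snd).inv).image _)
  obtain ⟨C1, hC1⟩ := h1.bddAbove
  obtain ⟨C2, hC2⟩ := h2.bddAbove
  refine ⟨max C1 C2 + 1, by omega, fun x hx => ?_, fun y hy => ?_⟩
  · have : wordLength S ((x, (1:B)) : A × B) ≤ C1 := hC1 ⟨x, by
      rcases hx with h | h
      · exact Or.inl h
      · exact Or.inr (Set.mem_inv.mpr (by simpa using h)), rfl⟩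
    omega
  · have : wordLength S (((1:A), y) : A × B) ≤ C2 := hC2 ⟨y, by
      rcases hy with h | h
      · exact Or.inl h
      · exact Or.inr (Set.mem_inv.mpr (by simpa using h)), rfl⟩
    omega

theorem embFst (hSgen : Subgroup.closure S = ⊤) {C : ℕ}
    (hC : ∀ x : A, (x ∈ Prod.fst '' S ∨ x⁻¹ ∈ Prod.fst '' S) →
      wordLength S ((x, (1:B)) : A × B) ≤ C) (a : A) :
    wordLength S ((a, (1:B)) : A × B) ≤ C * wordLength (Prod.fst '' S : Set A) a := by
  obtain ⟨l, hl, hp, he⟩ := wordLength_spec (genFst hSgen) a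
  have := wordLength_list_prod_le (l := l.map (MonoidHom.inl A B)) hSgen (C := C)
    (fun z hz => by
      rw [List.mem_map] at hz
      obtain ⟨x, hx, rfl⟩ := hz
      exact hC x (hl x hx))
  rw [List.prod_hom l (MonoidHom.inl A B), hp] at this
  simpa [he] using this

theorem embSnd (hSgen : Subgroup.closure S = ⊤) {C : ℕ}
    (hC : ∀ y : B, (y ∈ Prod.snd '' S ∨ y⁻¹ ∈ Prod.snd '' S) →
      wordLength S (((1:A), y) : A × B) ≤ C) (b : B) :
    wordLength S (((1:A), b) : A × B) ≤ C * wordLength (Prod.snd '' S : Set B) b := by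
  obtain ⟨l, hl, hp, he⟩ := wordLength_spec (genSnd hSgen) b
  have := wordLength_list_prod_le (l := l.map (MonoidHom.inr A B)) hSgen (C := C)
    (fun z hz => by
      rw [List.mem_map] at hz
      obtain ⟨y, hy, rfl⟩ := hz
      exact hC y (hl y hy))
  rw [List.prod_hom l (MonoidHom.inr A B), hp] at this
  simpa [he] using this

theorem fstLen (hSgen : Subgroup.closure S = ⊤) (p : A × B) :
    wordLength (Prod.fst '' S : Set A) p.1 ≤ wordLength S p := by
  simpa using wordLength_map_le hSgen (MonoidHom.fst A B) p

theorem sndLen (hSgen : Subgroup.closure S = ⊤) (p : A × B) :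
    wordLength (Prod.snd '' S : Set B) p.2 ≤ wordLength S p := by
  simpa using wordLength_map_le hSgen (MonoidHom.snd A B) p

end ProdSection
section Step1

variable {A B : Type*} [Group A] [Group B] {S : Set (A × B)}

/-- Every element `(a,b)` of `H` has `(a,1)` uniformly close to `H`. -/
theorem nearCorner (hSfin : S.Finite) (hSgen : Subgroup.closure S = ⊤)
    {H : Subgroup (A × B)} (hH : IsMorse S H) :
    ∃ M : ℕ, ∀ h ∈ H, ∃ h' ∈ H,
      wordLength S (((h.1, (1:B)) : A × B)⁻¹ * h') ≤ M := by
  obtain ⟨C, hC1, hCA, hCB⟩ := exists_letterBound hSfin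
  obtain ⟨M, hM⟩ := morse_nat hSgen hH (max 2 C) C (by omega) hC1
  refine ⟨M, ?_⟩
  rintro ⟨a, b⟩ hab
  show ∃ h' ∈ H, wordLength S (((a, (1:B)) : A × B)⁻¹ * h') ≤ M
  obtain ⟨α, hα0, hαm, hαg⟩ := exists_geodesic (genFst hSgen) a
  obtain ⟨β, hβ0, hβr, hβg⟩ := exists_geodesic (genSnd hSgen) b
  set m : ℕ := wordLength (Prod.fst '' S : Set A) a with hm
  set r : ℕ := wordLength (Prod.snd '' S : Set B) b with hr
  set n : ℕ := m + r with hn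
  set γ : Fin (n + 1) → A × B := fun i =>
    if (i : ℕ) ≤ m then ((α i, 1) : A × B) else ((a, β ((i : ℕ) - m)) : A × B) with hγ
  have hbounds : ∀ i j : Fin (n+1), (i:ℕ) ≤ (j:ℕ) →
      wordLength S ((γ i)⁻¹ * γ j) ≤ C * ((j:ℕ) - (i:ℕ)) ∧
      ((j:ℕ) - (i:ℕ)) ≤ (max 2 C) * wordLength S ((γ i)⁻¹ * γ j) := by
    intro i j hij
    have hjn : (j:ℕ) ≤ n := Nat.lt_succ_iff.mp j.isLt
    by_cases hjm : (j:ℕ) ≤ m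
    · have him : (i:ℕ) ≤ m := le_trans hij hjm
      have hval : (γ i)⁻¹ * γ j = (((α (i:ℕ))⁻¹ * α (j:ℕ), 1) : A × B) := by
        simp [hγ, him, hjm, Prod.ext_iff]
      have hgeo : wordLength (Prod.fst '' S : Set A) ((α (i:ℕ))⁻¹ * α (j:ℕ)) = (j:ℕ) - (i:ℕ) :=
        hαg _ _ hij hjm
      have hub := le_trans (embFst hSgen hCA ((α (i:ℕ))⁻¹ * α (j:ℕ)))
        (Nat.mul_le_mul_left C hgeo.le)
      have hlb : (j:ℕ) - (i:ℕ) ≤ wordLength S (((α (i:ℕ))⁻¹ * α (j:ℕ), 1) : A × B) :=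
        hgeo ▸ fstLen hSgen (((α (i:ℕ))⁻¹ * α (j:ℕ), 1) : A × B)
      rw [hval]
      exact ⟨hub, le_trans hlb (Nat.le_mul_of_pos_left _ (by omega))⟩
    · push_neg at hjm
      by_cases him : (i:ℕ) ≤ m
      · have hval : (γ i)⁻¹ * γ j =
            (((α (i:ℕ))⁻¹ * a, β ((j:ℕ) - m)) : A × B) := by
          simp [hγ, him, Nat.not_le.mpr hjm, Prod.ext_iff]
        have hz : wordLength (Prod.fst '' S : Set A) ((α (i:ℕ))⁻¹ * a) = m - (i:ℕ) := by
          have := hαg (i:ℕ) m him le_rfl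
          rwa [hαm] at this
        have hw : wordLength (Prod.snd '' S : Set B) (β ((j:ℕ) - m)) = (j:ℕ) - m := by
          have := hβg 0 ((j:ℕ) - m) (Nat.zero_le _) (by omega)
          rw [hβ0] at this
          simpa using this
        rw [hval]
        constructor
        · have hsplit : (((α (i:ℕ))⁻¹ * a, β ((j:ℕ) - m)) : A × B) =
              (((α (i:ℕ))⁻¹ * a, 1) : A × B) * (((1:A), β ((j:ℕ) - m)) : A × B) := by
            simp [Prod.ext_iff]
          rw [hsplit]
          have h1 := embFst hSgen hCA ((α (i:ℕ))⁻¹ * a)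
          have h2 := embSnd hSgen hCB (β ((j:ℕ) - m))
          have h3 := wordLength_mul hSgen (((α (i:ℕ))⁻¹ * a, 1) : A × B)
            (((1:A), β ((j:ℕ) - m)) : A × B)
          rw [hz] at h1
          rw [hw] at h2
          have : C * (m - (i:ℕ)) + C * ((j:ℕ) - m) = C * ((j:ℕ) - (i:ℕ)) := by
            rw [← Nat.mul_add]
            congr 1
            omega
          omega
        · have h1 : m - (i:ℕ) ≤ wordLength S (((α (i:ℕ))⁻¹ * a, β ((j:ℕ) - m)) : A × B) := by
            rw [← hz]
            exact fstLen hSgen (((α (i:ℕ))⁻¹ * a, β ((j:ℕ) - m)) : A × B)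
          have h2 : (j:ℕ) - m ≤ wordLength S (((α (i:ℕ))⁻¹ * a, β ((j:ℕ) - m)) : A × B) := by
            conv_lhs => rw [← hw]
            exact sndLen hSgen (((α (i:ℕ))⁻¹ * a, β ((j:ℕ) - m)) : A × B)
          have h3 : (max 2 C) * wordLength S (((α (i:ℕ))⁻¹ * a, β ((j:ℕ) - m)) : A × B) ≥
              2 * wordLength S (((α (i:ℕ))⁻¹ * a, β ((j:ℕ) - m)) : A × B) :=
            Nat.mul_le_mul_right _ (le_max_left 2 C)
          omega
      · push_neg at him
        have hval : (γ i)⁻¹ * γ j =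
            (((1:A), (β ((i:ℕ) - m))⁻¹ * β ((j:ℕ) - m)) : A × B) := by
          simp [hγ, Nat.not_le.mpr him, Nat.not_le.mpr hjm, Prod.ext_iff]
        have hgeo : wordLength (Prod.snd '' S : Set B) ((β ((i:ℕ) - m))⁻¹ * β ((j:ℕ) - m)) =
            ((j:ℕ) - m) - ((i:ℕ) - m) :=
          hβg _ _ (by omega) (by omega)
        have heq : ((j:ℕ) - m) - ((i:ℕ) - m) = (j:ℕ) - (i:ℕ) := by omega
        rw [heq] at hgeo
        have hub := le_trans (embSnd hSgen hCB ((β ((i:ℕ) - m))⁻¹ * β ((j:ℕ) - m)))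
          (Nat.mul_le_mul_left C hgeo.le)
        have hlb : (j:ℕ) - (i:ℕ) ≤
            wordLength S (((1:A), (β ((i:ℕ) - m))⁻¹ * β ((j:ℕ) - m)) : A × B) :=
          hgeo ▸ sndLen hSgen (((1:A), (β ((i:ℕ) - m))⁻¹ * β ((j:ℕ) - m)) : A × B)
        rw [hval]
        exact ⟨hub, le_trans hlb (Nat.le_mul_of_pos_left _ (by omega))⟩
  have h0 : γ 0 ∈ H := by
    have : γ 0 = 1 := by simp [hγ, hα0, Prod.ext_iff]
    rw [this]; exact one_mem H
  have hlast : γ (Fin.last n) ∈ H := by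
    have hval : γ (Fin.last n) = ((a, b) : A × B) := by
      by_cases hr0 : r = 0
      · have hb1 : b = 1 := by rw [← hβr, hr0, hβ0]
        have hle : (Fin.last n : ℕ) ≤ m := by simp [Fin.val_last]; omega
        simp only [hγ, if_pos hle]
        have : ((Fin.last n : Fin (n+1)) : ℕ) = m := by simp [Fin.val_last]; omega
        rw [this, hαm, hb1]
      · have hgt : ¬ ((Fin.last n : ℕ) ≤ m) := by
          simp only [Fin.val_last]
          omega
        simp only [hγ, if_neg hgt]
        have : (Fin.last n : ℕ) - m = r := by simp only [Fin.val_last]; omega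
        rw [this, hβr]
    rw [hval]; exact hab
  obtain ⟨h', hh'H, hh'd⟩ := hM n γ hbounds h0 hlast ⟨m, by omega⟩
  refine ⟨h', hh'H, ?_⟩
  have hγm : γ (⟨m, by omega⟩ : Fin (n+1)) = ((a, (1:B)) : A × B) := by
    simp [hγ, hαm]
  rwa [hγm] at hh'd

end Step1
section Step2

variable {A B : Type*} [Group A] [Group B] {S : Set (A × B)}

theorem wl_pair_le (hSgen : Subgroup.closure S = ⊤) {C : ℕ}
    (hCA : ∀ x : A, (x ∈ Prod.fst '' S ∨ x⁻¹ ∈ Prod.fst '' S) →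
      wordLength S ((x, (1:B)) : A × B) ≤ C)
    (hCB : ∀ y : B, (y ∈ Prod.snd '' S ∨ y⁻¹ ∈ Prod.snd '' S) →
      wordLength S (((1:A), y) : A × B) ≤ C) (z : A) (w : B) :
    wordLength S ((z, w) : A × B) ≤
      C * wordLength (Prod.fst '' S : Set A) z + C * wordLength (Prod.snd '' S : Set B) w := by
  have hsplit : ((z, w) : A × B) = ((z, 1) : A × B) * (((1:A), w) : A × B) := by
    simp [Prod.ext_iff]
  rw [hsplit]
  exact le_trans (wordLength_mul hSgen _ _)
    (add_le_add (embFst hSgen hCA z) (embSnd hSgen hCB w))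

theorem unboundedCorner (hSfin : S.Finite) (hSgen : Subgroup.closure S = ⊤)
    {H : Subgroup (A × B)} (hH : IsMorse S H)
    (hub : ∀ N : ℕ, ∃ h ∈ H, N ≤ wordLength (Prod.fst '' S : Set A) h.1) :
    ∃ D : ℕ, ∀ N : ℕ, ∃ h ∈ H,
      N ≤ wordLength (Prod.fst '' S : Set A) h.1 ∧
      wordLength (Prod.snd '' S : Set B) h.2 ≤ D := by
  obtain ⟨M, hM⟩ := nearCorner hSfin hSgen hH
  refine ⟨M, fun N => ?_⟩
  obtain ⟨⟨a, b⟩, habH, hab⟩ := hub (N + M)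
  obtain ⟨⟨p, q⟩, hpqH, hpq⟩ := hM (a, b) habH
  refine ⟨(p, q), hpqH, ?_, ?_⟩
  · -- N ≤ wl SA p
    have hpq' : wordLength S (((a, (1:B)) : A × B)⁻¹ * (p, q)) ≤ M := hpq
    have h1 : wordLength (Prod.fst '' S : Set A) (a⁻¹ * p) ≤ M :=
      le_trans (fstLen hSgen (((a, (1:B)) : A × B)⁻¹ * (p, q))) hpq'
    have h2 : wordLength (Prod.fst '' S : Set A) a ≤
        wordLength (Prod.fst '' S : Set A) p + wordLength (Prod.fst '' S : Set A) (p⁻¹ * a) := by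
      have := wordLength_mul (genFst hSgen) p (p⁻¹ * a)
      simpa using this
    have h3 : wordLength (Prod.fst '' S : Set A) (p⁻¹ * a) =
        wordLength (Prod.fst '' S : Set A) (a⁻¹ * p) := by
      rw [show p⁻¹ * a = (a⁻¹ * p)⁻¹ by group, wordLength_inv (genFst hSgen)]
    have hab' : N + M ≤ wordLength (Prod.fst '' S : Set A) a := hab
    show N ≤ wordLength (Prod.fst '' S : Set A) p
    omega
  · have := sndLen hSgen (((a, (1:B)) : A × B)⁻¹ * (p, q))
    show wordLength (Prod.snd '' S : Set B) q ≤ M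
    calc wordLength (Prod.snd '' S : Set B) q
        = wordLength (Prod.snd '' S : Set B) ((1:B)⁻¹ * q) := by rw [inv_one, one_mul]
      _ ≤ wordLength S (((a, (1:B)) : A × B)⁻¹ * (p, q)) := this
      _ ≤ M := hpq

theorem midReach (hSfin : S.Finite) (hSgen : Subgroup.closure S = ⊤)
    {H : Subgroup (A × B)} (hH : IsMorse S H)
    (hP : ∃ D : ℕ, ∀ N : ℕ, ∃ h ∈ H,
      N ≤ wordLength (Prod.fst '' S : Set A) h.1 ∧
      wordLength (Prod.snd '' S : Set B) h.2 ≤ D) :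
    ∃ M : ℕ, ∀ b : B, ∃ h ∈ H,
      wordLength S ((((1:A), b) : A × B)⁻¹ * h) ≤ M := by
  obtain ⟨C, hC1, hCA, hCB⟩ := exists_letterBound hSfin
  obtain ⟨M, hM⟩ := morse_nat hSgen hH (max 2 C) C (by omega) hC1
  obtain ⟨D, hD⟩ := hP
  refine ⟨M, fun b => ?_⟩
  set r : ℕ := wordLength (Prod.snd '' S : Set B) b with hr
  obtain ⟨⟨x, y⟩, hxyH, hx, hy⟩ := hD (2 * r + D + 1)
  simp only at hx hy
  obtain ⟨β, hβ0, hβr, hβg⟩ := exists_geodesic (genSnd hSgen) b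
  obtain ⟨α, hα0, hαm, hαg⟩ := exists_geodesic (genFst hSgen) x
  obtain ⟨δ, hδ0, hδt, hδg⟩ := exists_geodesic (genSnd hSgen) (b⁻¹ * y)
  set m : ℕ := wordLength (Prod.fst '' S : Set A) x with hm
  set t : ℕ := wordLength (Prod.snd '' S : Set B) (b⁻¹ * y) with ht
  have htb : t ≤ r + D := by
    have h1 := wordLength_mul (genSnd hSgen) b⁻¹ y
    have h2 : wordLength (Prod.snd '' S : Set B) b⁻¹ =
        wordLength (Prod.snd '' S : Set B) b := wordLength_inv (genSnd hSgen) b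
    omega
  have hm2 : 2 * r + D + 1 ≤ m := hx
  set n : ℕ := r + m + t with hn
  set γ : Fin (n + 1) → A × B := fun i =>
    if (i : ℕ) ≤ r then (((1:A), β (i : ℕ)) : A × B)
    else if (i : ℕ) ≤ r + m then ((α ((i : ℕ) - r), b) : A × B)
    else ((x, b * δ ((i : ℕ) - r - m)) : A × B) with hγ
  -- useful geodesic facts
  have hαfull : ∀ u, u ≤ m → wordLength (Prod.fst '' S : Set A) (α u) = u := by
    intro u hu
    have := hαg 0 u (Nat.zero_le _) hu
    rw [hα0] at this
    simpa using this
  have hαtail : ∀ u, u ≤ m → wordLength (Prod.fst '' S : Set A) ((α u)⁻¹ * x) = m - u := by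
    intro u hu
    have := hαg u m hu le_rfl
    rwa [hαm] at this
  have hδfull : ∀ u, u ≤ t → wordLength (Prod.snd '' S : Set B) (δ u) = u := by
    intro u hu
    have := hδg 0 u (Nat.zero_le _) hu
    rw [hδ0] at this
    simpa using this
  have hβtail : ∀ u, u ≤ r → wordLength (Prod.snd '' S : Set B) ((β u)⁻¹ * b) = r - u := by
    intro u hu
    have := hβg u r hu le_rfl
    rwa [hβr] at this
  have hbounds : ∀ i j : Fin (n+1), (i:ℕ) ≤ (j:ℕ) →
      wordLength S ((γ i)⁻¹ * γ j) ≤ C * ((j:ℕ) - (i:ℕ)) ∧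
      ((j:ℕ) - (i:ℕ)) ≤ (max 2 C) * wordLength S ((γ i)⁻¹ * γ j) := by
    intro i j hij
    have hjn : (j:ℕ) ≤ n := Nat.lt_succ_iff.mp j.isLt
    set i' : ℕ := (i:ℕ) with hi'
    set j' : ℕ := (j:ℕ) with hj'
    have hKC : 2 ≤ max 2 C := le_max_left 2 C
    -- generic finisher
    have finish : ∀ (z : A) (w : B), (γ i)⁻¹ * γ j = ((z, w) : A × B) →
        ∀ P Q : ℕ, wordLength (Prod.fst '' S : Set A) z ≤ P →
          wordLength (Prod.snd '' S : Set B) w ≤ Q →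
          P + Q ≤ j' - i' →
          j' - i' ≤ 2 * wordLength S ((z, w) : A × B) →
          wordLength S ((γ i)⁻¹ * γ j) ≤ C * (j' - i') ∧
          j' - i' ≤ (max 2 C) * wordLength S ((γ i)⁻¹ * γ j) := by
      intro z w hval P Q hPz hQw hPQ hlow
      rw [hval]
      constructor
      · calc wordLength S ((z, w) : A × B)
            ≤ C * wordLength (Prod.fst '' S : Set A) z +
              C * wordLength (Prod.snd '' S : Set B) w := wl_pair_le hSgen hCA hCB z w
          _ ≤ C * P + C * Q := add_le_add (Nat.mul_le_mul_left C hPz) (Nat.mul_le_mul_left C hQw)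
          _ = C * (P + Q) := (Nat.mul_add C P Q).symm
          _ ≤ C * (j' - i') := Nat.mul_le_mul_left C hPQ
      · calc j' - i' ≤ 2 * wordLength S ((z, w) : A × B) := hlow
          _ ≤ (max 2 C) * wordLength S ((z, w) : A × B) := Nat.mul_le_mul_right _ hKC
    by_cases hir : i' ≤ r
    · by_cases hjr : j' ≤ r
      · -- case (1,1)
        have hval : (γ i)⁻¹ * γ j = (((1:A), (β i')⁻¹ * β j') : A × B) := by
          simp [hγ, hir, hjr, ← hi', ← hj', Prod.ext_iff]
        have hgeo := hβg i' j' hij hjr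
        refine finish _ _ hval 0 (j' - i') (by simp [wordLength_one]) hgeo.le (by omega) ?_
        have := sndLen hSgen (((1:A), (β i')⁻¹ * β j') : A × B)
        simp only at this
        omega
      · push_neg at hjr
        by_cases hjm : j' ≤ r + m
        · -- case (1,2)
          have hval : (γ i)⁻¹ * γ j = ((α (j' - r), (β i')⁻¹ * b) : A × B) := by
            simp [hγ, hir, Nat.not_le.mpr hjr, hjm, ← hi', ← hj', Prod.ext_iff]
          have h1 := hαfull (j' - r) (by omega)
          have h2 := hβtail i' hir
          refine finish _ _ hval (j' - r) (r - i') h1.le h2.le (by omega) ?_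
          have l1 := fstLen hSgen ((α (j' - r), (β i')⁻¹ * b) : A × B)
          have l2 := sndLen hSgen ((α (j' - r), (β i')⁻¹ * b) : A × B)
          simp only at l1 l2
          omega
        · -- case (1,3)
          push_neg at hjm
          have hval : (γ i)⁻¹ * γ j =
              ((x, (β i')⁻¹ * (b * δ (j' - r - m))) : A × B) := by
            simp [hγ, hir, Nat.not_le.mpr hjr, Nat.not_le.mpr hjm, ← hi', ← hj', Prod.ext_iff]
          have hsplitB : (β i')⁻¹ * (b * δ (j' - r - m)) =
              ((β i')⁻¹ * b) * δ (j' - r - m) := by group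
          have h2 : wordLength (Prod.snd '' S : Set B) ((β i')⁻¹ * (b * δ (j' - r - m))) ≤
              (r - i') + (j' - r - m) := by
            rw [hsplitB]
            have := wordLength_mul (genSnd hSgen) ((β i')⁻¹ * b) (δ (j' - r - m))
            have e1 := hβtail i' hir
            have e2 := hδfull (j' - r - m) (by omega)
            omega
          refine finish _ _ hval m ((r - i') + (j' - r - m)) le_rfl h2 (by omega) ?_
          have l1 := fstLen hSgen ((x, (β i')⁻¹ * (b * δ (j' - r - m))) : A × B)
          simp only at l1
          rw [hm] at hm2
          omega
    · push_neg at hir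
      by_cases him : i' ≤ r + m
      · by_cases hjm : j' ≤ r + m
        · -- case (2,2)
          have hirn : ¬ (i' ≤ r) := by omega
          have hjrn : ¬ (j' ≤ r) := by omega
          have hval : (γ i)⁻¹ * γ j =
              (((α (i' - r))⁻¹ * α (j' - r), 1) : A × B) := by
            simp [hγ, hirn, him, hjrn, hjm, ← hi', ← hj', Prod.ext_iff]
          have hgeo := hαg (i' - r) (j' - r) (by omega) (by omega)
          refine finish _ _ hval (j' - i') 0 (by rw [hgeo]; omega)
            (by simp [wordLength_one]) (by omega) ?_
          have := fstLen hSgen ((((α (i' - r))⁻¹ * α (j' - r)), 1) : A × B)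
          simp only at this
          omega
        · -- case (2,3)
          push_neg at hjm
          have hirn : ¬ (i' ≤ r) := by omega
          have hjrn : ¬ (j' ≤ r) := by omega
          have hjmn : ¬ (j' ≤ r + m) := by omega
          have hval : (γ i)⁻¹ * γ j =
              (((α (i' - r))⁻¹ * x, δ (j' - r - m)) : A × B) := by
            simp [hγ, hirn, him, hjrn, hjmn, ← hi', ← hj', Prod.ext_iff]
          have h1 := hαtail (i' - r) (by omega)
          have h2 := hδfull (j' - r - m) (by omega)
          refine finish _ _ hval (m - (i' - r)) (j' - r - m) h1.le h2.le (by omega) ?_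
          have l1 := fstLen hSgen (((α (i' - r))⁻¹ * x, δ (j' - r - m)) : A × B)
          have l2 := sndLen hSgen (((α (i' - r))⁻¹ * x, δ (j' - r - m)) : A × B)
          simp only at l1 l2
          omega
      · -- case (3,3)
        push_neg at him
        have hval : (γ i)⁻¹ * γ j =
            (((1:A), (δ (i' - r - m))⁻¹ * δ (j' - r - m)) : A × B) := by
          have h1 : ¬ i' ≤ r := by omega
          have h2 : ¬ j' ≤ r := by omega
          have h3 : ¬ i' ≤ r + m := by omega
          have h4 : ¬ j' ≤ r + m := by omega
          simp [hγ, h1, h2, h3, h4, ← hi', ← hj', Prod.ext_iff]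
          done
        have hgeo := hδg (i' - r - m) (j' - r - m) (by omega) (by omega)
        refine finish _ _ hval 0 (j' - i') (by simp [wordLength_one])
          (by rw [hgeo]; omega) (by omega) ?_
        have := sndLen hSgen (((1:A), (δ (i' - r - m))⁻¹ * δ (j' - r - m)) : A × B)
        simp only at this
        omega
  have h0 : γ 0 ∈ H := by
    have : γ 0 = 1 := by simp [hγ, hβ0, Prod.ext_iff]
    rw [this]; exact one_mem H
  have hlast : γ (Fin.last n) ∈ H := by
    have hval : γ (Fin.last n) = ((x, y) : A × B) := by
      have hlv : ((Fin.last n : Fin (n+1)) : ℕ) = n := rfl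
      by_cases ht0 : t = 0
      · have hy : y = b := by
          have h1 : b⁻¹ * y = 1 := by
            apply eq_one_of_wordLength_eq_zero (genSnd hSgen)
            omega
          rw [inv_mul_eq_one] at h1
          exact h1.symm
        have h1 : ¬ (n ≤ r) := by omega
        have h2 : n ≤ r + m := by omega
        simp only [hγ, hlv, if_neg h1, if_pos h2]
        have : n - r = m := by omega
        rw [this, hαm, hy]
      · have h1 : ¬ (n ≤ r) := by omega
        have h2 : ¬ (n ≤ r + m) := by omega
        simp only [hγ, hlv, if_neg h1, if_neg h2]
        have : n - r - m = t := by omega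
        rw [this, hδt, mul_inv_cancel_left]
    rw [hval]; exact hxyH
  obtain ⟨h', hh'H, hh'd⟩ := hM n γ hbounds h0 hlast ⟨r, by omega⟩
  refine ⟨h', hh'H, ?_⟩
  have hγr : γ (⟨r, by omega⟩ : Fin (n+1)) = (((1:A), b) : A × B) := by
    simp [hγ, hβr]
    exact hβr
  rwa [hγr] at hh'd

end Step2
section Transfer

variable {G : Type*} [Group G] {G' : Type*} [Group G']

theorem wordLength_equiv_symm {S : Set G} (hSgen : Subgroup.closure S = ⊤)
    (e : G ≃* G') (z : G) (h' : G') :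
    wordLength (⇑e '' S) ((e z)⁻¹ * h') = wordLength S (z⁻¹ * e.symm h') := by
  conv_lhs => rw [show h' = e (e.symm h') by simp]
  rw [← map_inv, ← map_mul, wordLength_equiv hSgen e]

theorem closure_image_equiv {S : Set G} (hSgen : Subgroup.closure S = ⊤) (e : G ≃* G') :
    Subgroup.closure (⇑e '' S) = ⊤ := by
  rw [show (⇑e '' S) = ⇑e.toMonoidHom '' S from rfl, ← MonoidHom.map_closure, hSgen]
  exact Subgroup.map_top_of_surjective _ e.surjective

theorem isMorse_image {S : Set G} (hSgen : Subgroup.closure S = ⊤) (e : G ≃* G')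
    {H : Subgroup G} (hH : IsMorse S H) : IsMorse (⇑e '' S) (H.map e.toMonoidHom) := by
  intro k c hk hc
  obtain ⟨M, hM⟩ := hH k c hk hc
  refine ⟨M, fun n γ' hγ' h0 hl i => ?_⟩
  have hwd : ∀ u v : G', wordDist (⇑e '' S) u v = wordDist S (e.symm u) (e.symm v) := by
    intro u v
    unfold wordDist
    have : u⁻¹ * v = e ((e.symm u)⁻¹ * e.symm v) := by simp
    rw [this, wordLength_equiv hSgen e]
  have hQG : IsQuasiGeodesic S k c (fun i => e.symm (γ' i)) := by
    intro i j
    have := hγ' i j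
    rwa [hwd (γ' i) (γ' j)] at this
  obtain ⟨h, hhH, hhd⟩ := hM n (fun i => e.symm (γ' i)) hQG
    (Subgroup.mem_map_equiv.mp h0) (Subgroup.mem_map_equiv.mp hl) i
  refine ⟨e h, Subgroup.mem_map_equiv.mpr (by simpa using hhH), ?_⟩
  rw [hwd (γ' i) (e h)]
  simpa using hhd

end Transfer

section Density

variable {A B : Type*} [Group A] [Group B] {S : Set (A × B)}

theorem dense_of_QAQB (hSfin : S.Finite) (hSgen : Subgroup.closure S = ⊤)
    {H : Subgroup (A × B)}
    (hQA : ∃ M1 : ℕ, ∀ a : A, ∃ h ∈ H, wordLength S (((a, (1:B)) : A × B)⁻¹ * h) ≤ M1)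
    (hQB : ∃ M2 : ℕ, ∀ b : B, ∃ h ∈ H, wordLength S ((((1:A), b) : A × B)⁻¹ * h) ≤ M2) :
    ∃ R : ℕ, ∀ g : A × B, ∃ h ∈ H, wordLength S (g⁻¹ * h) ≤ R := by
  obtain ⟨C, hC1, hCA, hCB⟩ := exists_letterBound hSfin
  obtain ⟨M1, h1⟩ := hQA
  obtain ⟨M2, h2⟩ := hQB
  refine ⟨C * M1 + M2, ?_⟩
  rintro ⟨a, b⟩
  obtain ⟨⟨p, q⟩, hpq, hd1⟩ := h1 a
  obtain ⟨⟨u, v⟩, huv, hd2⟩ := h2 (q⁻¹ * b)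
  refine ⟨(p, q) * (u, v), mul_mem hpq huv, ?_⟩
  have key : ((a, b) : A × B)⁻¹ * ((p, q) * (u, v)) =
      ((a⁻¹ * p, (1:B)) : A × B) * (((((1:A), q⁻¹ * b)) : A × B)⁻¹ * (u, v)) := by
    rw [Prod.ext_iff]
    constructor <;> simp <;> group
  rw [key]
  have e1 : wordLength (Prod.fst '' S : Set A) (a⁻¹ * p) ≤ M1 :=
    le_trans (fstLen hSgen (((a, (1:B)) : A × B)⁻¹ * (p, q))) hd1
  calc wordLength S _ ≤ wordLength S ((a⁻¹ * p, (1:B)) : A × B) +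
        wordLength S (((((1:A), q⁻¹ * b)) : A × B)⁻¹ * (u, v)) := wordLength_mul hSgen _ _
    _ ≤ C * M1 + M2 := by
        have h3 := embFst hSgen hCA (a⁻¹ * p)
        have h4 : C * wordLength (Prod.fst '' S : Set A) (a⁻¹ * p) ≤ C * M1 :=
          Nat.mul_le_mul_left C e1
        omega

theorem index_ne_zero_of_dense {G : Type*} [Group G] {S : Set G}
    (hSfin : S.Finite) (hSgen : Subgroup.closure S = ⊤) {H : Subgroup G}
    (hd : ∃ R : ℕ, ∀ g : G, ∃ h ∈ H, wordLength S (g⁻¹ * h) ≤ R) : H.index ≠ 0 := by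
  obtain ⟨R, hR⟩ := hd
  have hfin : Finite (G ⧸ H) := by
    rw [← Set.finite_univ_iff]
    apply Set.Finite.subset ((finite_ball hSfin hSgen R).image (QuotientGroup.mk : G → G ⧸ H))
    intro qq _
    induction qq using QuotientGroup.induction_on with
    | H g =>
        obtain ⟨h, hh, hwl⟩ := hR g⁻¹
        exact ⟨g * h, by simpa using hwl, QuotientGroup.mk_mul_of_mem g hh⟩
  exact Subgroup.index_ne_zero_of_finite

theorem denseOfHubA [Infinite B] (hSfin : S.Finite) (hSgen : Subgroup.closure S = ⊤)
    {H : Subgroup (A × B)} (hH : IsMorse S H)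
    (hub : ∀ N : ℕ, ∃ h ∈ H, N ≤ wordLength (Prod.fst '' S : Set A) h.1) :
    ∃ R : ℕ, ∀ g : A × B, ∃ h ∈ H, wordLength S (g⁻¹ * h) ≤ R := by
  have hP := unboundedCorner hSfin hSgen hH hub
  obtain ⟨M2, hM2⟩ := midReach hSfin hSgen hH hP
  -- bounded-A unbounded-B elements
  have hPB : ∃ D : ℕ, ∀ N : ℕ, ∃ h ∈ H,
      N ≤ wordLength (Prod.snd '' S : Set B) h.2 ∧
      wordLength (Prod.fst '' S : Set A) h.1 ≤ D := by
    refine ⟨M2, fun N => ?_⟩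
    obtain ⟨b, -, hb⟩ := exists_large (hSfin.image Prod.snd) (genSnd hSgen)
      (Set.infinite_univ : (Set.univ : Set B).Infinite) (N + M2)
    obtain ⟨⟨p, q⟩, hpqH, hd⟩ := hM2 b
    have l1 : wordLength (Prod.fst '' S : Set A) ((1:A)⁻¹ * p) ≤ M2 :=
      le_trans (fstLen hSgen ((((1:A), b) : A × B)⁻¹ * (p, q))) hd
    rw [inv_one, one_mul] at l1
    have l2 : wordLength (Prod.snd '' S : Set B) (b⁻¹ * q) ≤ M2 :=
      le_trans (sndLen hSgen ((((1:A), b) : A × B)⁻¹ * (p, q))) hd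
    have l3 := wordLength_mul (genSnd hSgen) q (q⁻¹ * b)
    have l4 : wordLength (Prod.snd '' S : Set B) (q⁻¹ * b) =
        wordLength (Prod.snd '' S : Set B) (b⁻¹ * q) := by
      rw [show q⁻¹ * b = (b⁻¹ * q)⁻¹ by group, wordLength_inv (genSnd hSgen)]
    simp only [mul_inv_cancel_left] at l3
    exact ⟨(p, q), hpqH, by show N ≤ wordLength (Prod.snd '' S : Set B) q; omega,
      by show wordLength (Prod.fst '' S : Set A) p ≤ M2; exact l1⟩
  -- flip
  set e : (A × B) ≃* (B × A) := MulEquiv.prodComm with he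
  have hSfin' : (⇑e '' S).Finite := hSfin.image _
  have hSgen' : Subgroup.closure (⇑e '' S) = ⊤ := closure_image_equiv hSgen e
  have hH' : IsMorse (⇑e '' S) (H.map e.toMonoidHom) := isMorse_image hSgen e hH
  have hA' : (Prod.fst '' (⇑e '' S) : Set B) = Prod.snd '' S := by
    rw [← Set.image_comp]; rfl
  have hB' : (Prod.snd '' (⇑e '' S) : Set A) = Prod.fst '' S := by
    rw [← Set.image_comp]; rfl
  have hP' : ∃ D : ℕ, ∀ N : ℕ, ∃ h' ∈ H.map e.toMonoidHom,
      N ≤ wordLength (Prod.fst '' (⇑e '' S) : Set B) h'.1 ∧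
      wordLength (Prod.snd '' (⇑e '' S) : Set A) h'.2 ≤ D := by
    obtain ⟨D, hD⟩ := hPB
    refine ⟨D, fun N => ?_⟩
    obtain ⟨⟨p, q⟩, hpqH, hx, hy⟩ := hD N
    refine ⟨(q, p), ⟨(p, q), hpqH, rfl⟩, ?_, ?_⟩
    · rw [hA']; exact hx
    · rw [hB']; exact hy
  obtain ⟨M3, hM3⟩ := midReach hSfin' hSgen' hH' hP'
  have hQA : ∃ M1 : ℕ, ∀ a : A, ∃ h ∈ H, wordLength S (((a, (1:B)) : A × B)⁻¹ * h) ≤ M1 := by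
    refine ⟨M3, fun a => ?_⟩
    obtain ⟨h', hh', hd⟩ := hM3 a
    refine ⟨e.symm h', Subgroup.mem_map_equiv.mp hh', ?_⟩
    have : (((1:B), a) : B × A) = e ((a, (1:B)) : A × B) := rfl
    rw [this, wordLength_equiv_symm hSgen e] at hd
    exact hd
  exact dense_of_QAQB hSfin hSgen hQA ⟨M2, hM2⟩

end Density

end Aux

/-- A Morse subgroup of a direct product of two finitely generated
infinite groups is finite or of finite index. -/
theorem morse_subgroup_of_product_finite_or_finiteIndex
    {A B : Type*} [Group A] [Group B] [Infinite A] [Infinite B]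
    (hA : Group.FG A) (hB : Group.FG B)
    (S : Set (A × B)) (hSfin : S.Finite) (hSgen : Subgroup.closure S = ⊤)
    (H : Subgroup (A × B)) (hH : IsMorse S H) :
    (H : Set (A × B)).Finite ∨ H.index ≠ 0 := by
  by_cases hfin : (H : Set (A × B)).Finite
  · exact Or.inl hfin
  right
  have hinf : (H : Set (A × B)).Infinite := hfin
  obtain ⟨C, hC1, hCA, hCB⟩ := exists_letterBound hSfin
  have hcase : (∀ N : ℕ, ∃ h ∈ H, N ≤ wordLength (Prod.fst '' S : Set A) h.1) ∨
      (∀ N : ℕ, ∃ h ∈ H, N ≤ wordLength (Prod.snd '' S : Set B) h.2) := by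
    by_contra hcon
    push_neg at hcon
    obtain ⟨⟨N1, hN1⟩, ⟨N2, hN2⟩⟩ := hcon
    obtain ⟨⟨x, y⟩, hxyH, hwl⟩ := exists_large hSfin hSgen hinf (C * N1 + C * N2 + 1)
    have hb := wl_pair_le hSgen hCA hCB x y
    have e1 : wordLength (Prod.fst '' S : Set A) x < N1 := hN1 (x, y) hxyH
    have e2 : wordLength (Prod.snd '' S : Set B) y < N2 := hN2 (x, y) hxyH
    have m1 : C * wordLength (Prod.fst '' S : Set A) x ≤ C * N1 :=
      Nat.mul_le_mul_left C e1.le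
    have m2 : C * wordLength (Prod.snd '' S : Set B) y ≤ C * N2 :=
      Nat.mul_le_mul_left C e2.le
    have hxy : wordLength S ((x, y) : A × B) ≥ C * N1 + C * N2 + 1 := hwl
    omega
  cases hcase with
  | inl hub => exact index_ne_zero_of_dense hSfin hSgen (denseOfHubA hSfin hSgen hH hub)
  | inr hub =>
      set e : (A × B) ≃* (B × A) := MulEquiv.prodComm with he
      have hSfin' : (⇑e '' S).Finite := hSfin.image _
      have hSgen' : Subgroup.closure (⇑e '' S) = ⊤ := closure_image_equiv hSgen e
      have hH' : IsMorse (⇑e '' S) (H.map e.toMonoidHom) := isMorse_image hSgen e hH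
      have hA' : (Prod.fst '' (⇑e '' S) : Set B) = Prod.snd '' S := by
        rw [← Set.image_comp]; rfl
      have hub' : ∀ N : ℕ, ∃ h' ∈ H.map e.toMonoidHom,
          N ≤ wordLength (Prod.fst '' (⇑e '' S) : Set B) h'.1 := by
        intro N
        obtain ⟨⟨p, q⟩, hh, hq⟩ := hub N
        refine ⟨(q, p), ⟨(p, q), hh, rfl⟩, ?_⟩
        rw [hA']; exact hq
      obtain ⟨R, hR⟩ := denseOfHubA hSfin' hSgen' hH' hub'
      refine index_ne_zero_of_dense hSfin hSgen ⟨R, fun g => ?_⟩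
      obtain ⟨h', hh', hwd⟩ := hR (e g)
      refine ⟨e.symm h', Subgroup.mem_map_equiv.mp hh', ?_⟩
      rwa [wordLength_equiv_symm hSgen e] at hwd
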